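/- For every fixed μ_s > 0, both limits lim_{μ_d→0⁺} R(μ_s,μ_d) and lim_{μ_d→0⁺} R̃(μ_s,μ_d) exist and are equal to μ_s e^{−μ_s}(α + p₀)(1 − h((sα + p₀/2)/(α + p₀))) + e^{−μ_s}p₀ − (1 − e^{−αμ_s} + p₀)·η·h((s(1 − e^{−αμ_s}) + p₀/2)/(1 − e^{−αμ_s} + p₀)). -/

import Mathlib

/-- Binary entropy function (base-2). Note `Real.logb 2 0 = 0`, so `binEnt 0 = binEnt 1 = 0`. -/
noncomputable def binEnt (x : ℝ) : ℝ :=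
  -x * Real.logb 2 x - (1 - x) * Real.logb 2 (1 - x)

/-- Estimate `b̂(μ)` of the phase-error detection rate of the single photon pulse. -/
noncomputable def bHat (α s p₀ μ : ℝ) : ℝ :=
  (s * (1 - Real.exp (-α * μ)) * Real.exp μ + (p₀ / 2) * (Real.exp μ - 1)) / μ

/-- Estimate `ĉ(μ₁,μ₂)` of the rate that the single photon pulse is detected
without phase error. -/
noncomputable def cHat (α s p₀ μ₁ μ₂ : ℝ) : ℝ :=
  (μ₂ ^ 2 * Real.exp μ₁ * ((1 - s) * (1 - Real.exp (-α * μ₁)) + (p₀ / 2) * (1 - Real.exp (-μ₁)))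
    - μ₁ ^ 2 * Real.exp μ₂ * ((1 - s) * (1 - Real.exp (-α * μ₂)) + (p₀ / 2) * (1 - Real.exp (-μ₂))))
  / (μ₁ * μ₂ * (μ₂ - μ₁))

/-- Estimate `â(μ₁,μ₂)` of the detection rate of the single photon pulse. -/
noncomputable def aHat (α p₀ μ₁ μ₂ : ℝ) : ℝ :=
  (μ₂ ^ 2 * Real.exp μ₁ * ((1 - Real.exp (-α * μ₁)) + p₀ * (1 - Real.exp (-μ₁)))
    - μ₁ ^ 2 * Real.exp μ₂ * ((1 - Real.exp (-α * μ₂)) + p₀ * (1 - Real.exp (-μ₂))))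
  / (μ₁ * μ₂ * (μ₂ - μ₁))

/-- Detection rate `p₊(μ)` of a pulse of intensity `μ`. -/
noncomputable def pPlus (α p₀ μ : ℝ) : ℝ := 1 - Real.exp (-α * μ) + p₀

/-- Error rate `e₊(μ)` of a pulse of intensity `μ`. -/
noncomputable def ePlus (α s p₀ μ : ℝ) : ℝ :=
  (s * (1 - Real.exp (-α * μ)) + p₀ / 2) / pPlus α p₀ μ

/-- The improved asymptotic key generation rate `R(μ_s, μ_d)` for `0 < μ_d < μ_s`. -/
noncomputable def Rrate (α s p₀ η μs μd : ℝ) : ℝ :=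
  μs * Real.exp (-μs) * (cHat α s p₀ μd μs + bHat α s p₀ μd) *
      (1 - binEnt (bHat α s p₀ μd / (cHat α s p₀ μd μs + bHat α s p₀ μd)))
    + Real.exp (-μs) * p₀ - pPlus α p₀ μs * η * binEnt (ePlus α s p₀ μs)

/-- The conventional asymptotic key generation rate `R̃(μ_s, μ_d)` for `0 < μ_d < μ_s`. -/
noncomputable def Rtilde (α s p₀ η μs μd : ℝ) : ℝ :=
  μs * Real.exp (-μs) * aHat α p₀ μd μs *
      (1 - binEnt (bHat α s p₀ μd / aHat α p₀ μd μs))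
    + Real.exp (-μs) * p₀ - pPlus α p₀ μs * η * binEnt (ePlus α s p₀ μs)


open Filter Real Set


lemma hasDerivAt_F (α c₁ c₂ : ℝ) :
    HasDerivAt (fun μ : ℝ => Real.exp μ * (c₁ * (1 - Real.exp (-α * μ)) + c₂ * (1 - Real.exp (-μ))))
      (c₁ * α + c₂) 0 := by
  have h1 : HasDerivAt (fun μ : ℝ => Real.exp (-α * μ)) (-α) 0 := by
    have := (Real.hasDerivAt_exp (-α * 0)).comp 0 ((hasDerivAt_id (0:ℝ)).const_mul (-α))
    simpa [Function.comp_def, neg_mul] using this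
  have h2 : HasDerivAt (fun μ : ℝ => Real.exp (-μ)) (-1) 0 := by
    have := (Real.hasDerivAt_exp (-(0:ℝ))).comp 0 (hasDerivAt_id (0:ℝ)).neg
    simpa [Function.comp_def] using this
  have hinner : HasDerivAt (fun μ : ℝ => c₁ * (1 - Real.exp (-α * μ)) + c₂ * (1 - Real.exp (-μ)))
      (c₁ * α + c₂) 0 := by
    have : HasDerivAt (fun μ : ℝ => c₁ * (1 - Real.exp (-α * μ)) + c₂ * (1 - Real.exp (-μ)))
        (c₁ * (0 - -α) + c₂ * (0 - -1)) 0 := (((hasDerivAt_const (0:ℝ) (1:ℝ)).sub h1).const_mul c₁).add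
      (((hasDerivAt_const (0:ℝ) (1:ℝ)).sub h2).const_mul c₂)
    convert this using 1
    ring
  have : HasDerivAt (fun μ : ℝ => Real.exp μ * (c₁ * (1 - Real.exp (-α * μ)) + c₂ * (1 - Real.exp (-μ))))
      (Real.exp 0 * (c₁ * (1 - Real.exp (-α * 0)) + c₂ * (1 - Real.exp (-0))) + Real.exp 0 * (c₁ * α + c₂)) 0 :=
    (Real.hasDerivAt_exp 0).mul hinner
  convert this using 1
  simp

lemma tendsto_div_self {f : ℝ → ℝ} {L : ℝ} (hf : HasDerivAt f L 0) (h0 : f 0 = 0) :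
    Tendsto (fun μ => f μ / μ) (nhdsWithin (0:ℝ) {(0:ℝ)}ᶜ) (nhds L) := by
  have h := hasDerivAt_iff_tendsto_slope.mp hf
  refine h.congr ?_
  intro x
  simp [slope_def_field, h0]

lemma continuousAt_binEnt {x : ℝ} (h0 : x ≠ 0) (h1 : x ≠ 1) :
    ContinuousAt binEnt x := by
  unfold binEnt
  have l1 : ContinuousAt (fun y : ℝ => Real.logb 2 y) x := by
    simp only [Real.logb]
    exact (Real.continuousAt_log h0).div_const _
  have l2 : ContinuousAt (fun y : ℝ => Real.logb 2 (1 - y)) x := by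
    simp only [Real.logb]
    have hl : ContinuousAt Real.log (1 - x) :=
      Real.continuousAt_log (by intro h; apply h1; linarith [sub_eq_zero.mp h])
    exact (hl.comp ((continuous_const.sub continuous_id).continuousAt)).div_const _
  exact ((continuousAt_id.neg.mul l1)).sub
    (((continuous_const.sub continuous_id).continuousAt).mul l2)

theorem stmt7 (α s p₀ η μs : ℝ)
    (hα : 0 < α) (hα1 : α ≤ 1) (hs0 : 0 ≤ s) (hs : s < 1 / 2) (hp : 0 < p₀) (hη : 0 ≤ η)
    (hμs : 0 < μs) :
    Filter.Tendsto (fun μd => Rrate α s p₀ η μs μd)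
      (nhdsWithin 0 (Set.Ioo 0 μs))
      (nhds (μs * Real.exp (-μs) * (α + p₀) *
          (1 - binEnt ((s * α + p₀ / 2) / (α + p₀)))
        + Real.exp (-μs) * p₀
        - (1 - Real.exp (-α * μs) + p₀) * η *
            binEnt ((s * (1 - Real.exp (-α * μs)) + p₀ / 2) / (1 - Real.exp (-α * μs) + p₀))))
    ∧
    Filter.Tendsto (fun μd => Rtilde α s p₀ η μs μd)
      (nhdsWithin 0 (Set.Ioo 0 μs))
      (nhds (μs * Real.exp (-μs) * (α + p₀) *
          (1 - binEnt ((s * α + p₀ / 2) / (α + p₀)))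
        + Real.exp (-μs) * p₀
        - (1 - Real.exp (-α * μs) + p₀) * η *
            binEnt ((s * (1 - Real.exp (-α * μs)) + p₀ / 2) / (1 - Real.exp (-α * μs) + p₀)))) := by
  set l : Filter ℝ := nhdsWithin 0 (Set.Ioo 0 μs) with hl_def
  have hl : l ≤ nhdsWithin (0:ℝ) {(0:ℝ)}ᶜ :=
    nhdsWithin_mono 0 (fun x hx => ne_of_gt hx.1)
  have hμ0 : Tendsto (fun μ : ℝ => μ) l (nhds 0) := tendsto_id.mono_left nhdsWithin_le_nhds
  have hmem : ∀ᶠ μ in l, μ ∈ Set.Ioo (0:ℝ) μs := self_mem_nhdsWithin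
  -- limit of bHat
  have hb : Tendsto (fun μ => bHat α s p₀ μ) l (nhds (s * α + p₀ / 2)) := by
    have hF := (tendsto_div_self (hasDerivAt_F α s (p₀/2)) (by simp)).mono_left hl
    refine hF.congr (fun μ => ?_)
    unfold bHat
    congr 1
    have hexp : Real.exp μ * Real.exp (-μ) = 1 := by rw [← Real.exp_add]; simp
    linear_combination (-(p₀ / 2)) * hexp
  -- generic limit for cHat/aHat shape
  have key : ∀ c₁ c₂ : ℝ, Tendsto (fun μ =>
      (μs ^ 2 * Real.exp μ * (c₁ * (1 - Real.exp (-α * μ)) + c₂ * (1 - Real.exp (-μ)))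
        - μ ^ 2 * Real.exp μs * (c₁ * (1 - Real.exp (-α * μs)) + c₂ * (1 - Real.exp (-μs))))
      / (μ * μs * (μs - μ))) l (nhds (c₁ * α + c₂)) := by
    intro c₁ c₂
    set F : ℝ → ℝ := fun μ => Real.exp μ * (c₁ * (1 - Real.exp (-α * μ)) + c₂ * (1 - Real.exp (-μ))) with hF_def
    have hF := (tendsto_div_self (hasDerivAt_F α c₁ c₂) (by simp)).mono_left hl
    have hnum : Tendsto (fun μ => μs ^ 2 * (F μ / μ) - μ * F μs) l
        (nhds (μs ^ 2 * (c₁ * α + c₂) - 0 * F μs)) :=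
      (hF.const_mul _).sub (hμ0.mul_const _)
    have hden : Tendsto (fun μ => μs * (μs - μ)) l (nhds (μs * (μs - 0))) :=
      tendsto_const_nhds.mul (tendsto_const_nhds.sub hμ0)
    have hden_ne : μs * (μs - 0) ≠ 0 := by nlinarith
    have hq := hnum.div hden hden_ne
    have hval : (μs ^ 2 * (c₁ * α + c₂) - 0 * F μs) / (μs * (μs - 0)) = c₁ * α + c₂ := by
      have hμs0 : μs ≠ 0 := ne_of_gt hμs
      field_simp
      ring
    rw [hval] at hq
    refine hq.congr' ?_
    filter_upwards [hmem] with μ hμ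
    have hμne : μ ≠ 0 := ne_of_gt hμ.1
    have hsub : μs - μ ≠ 0 := ne_of_gt (sub_pos.mpr hμ.2)
    have hμs0 : μs ≠ 0 := ne_of_gt hμs
    simp only [hF_def, Pi.div_apply]
    field_simp
  have hc : Tendsto (fun μ => cHat α s p₀ μ μs) l (nhds ((1 - s) * α + p₀ / 2)) := by
    refine (key (1 - s) (p₀ / 2)).congr (fun μ => ?_)
    unfold cHat
    ring_nf
  have ha : Tendsto (fun μ => aHat α p₀ μ μs) l (nhds (α + p₀)) := by
    have hn : nhds ((1:ℝ) * α + p₀) = nhds (α + p₀) := by rw [one_mul]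
    have h := key 1 p₀
    rw [hn] at h
    refine h.congr (fun μ => ?_)
    unfold aHat
    ring_nf
  -- sums and ratios
  have hsum : Tendsto (fun μ => cHat α s p₀ μ μs + bHat α s p₀ μ) l (nhds (α + p₀)) := by
    have h := hc.add hb
    have e : (1 - s) * α + p₀ / 2 + (s * α + p₀ / 2) = α + p₀ := by ring
    rwa [e] at h
  have hden_pos : (0:ℝ) < α + p₀ := by linarith
  have hnum_pos : (0:ℝ) < s * α + p₀ / 2 := by nlinarith [mul_nonneg hs0 hα.le]
  have hnum_lt : s * α + p₀ / 2 < α + p₀ := by nlinarith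
  have hr0 : (s * α + p₀ / 2) / (α + p₀) ≠ 0 := ne_of_gt (div_pos hnum_pos hden_pos)
  have hr1 : (s * α + p₀ / 2) / (α + p₀) ≠ 1 :=
    ne_of_lt ((div_lt_one hden_pos).mpr hnum_lt)
  have hcont := continuousAt_binEnt hr0 hr1
  have hr : Tendsto (fun μ => bHat α s p₀ μ / (cHat α s p₀ μ μs + bHat α s p₀ μ)) l
      (nhds ((s * α + p₀ / 2) / (α + p₀))) := hb.div hsum (ne_of_gt hden_pos)
  have hr' : Tendsto (fun μ => bHat α s p₀ μ / aHat α p₀ μ μs) l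
      (nhds ((s * α + p₀ / 2) / (α + p₀))) := hb.div ha (ne_of_gt hden_pos)
  have hbin : Tendsto (fun μ => binEnt (bHat α s p₀ μ / (cHat α s p₀ μ μs + bHat α s p₀ μ))) l
      (nhds (binEnt ((s * α + p₀ / 2) / (α + p₀)))) := hcont.tendsto.comp hr
  have hbin' : Tendsto (fun μ => binEnt (bHat α s p₀ μ / aHat α p₀ μ μs)) l
      (nhds (binEnt ((s * α + p₀ / 2) / (α + p₀)))) := hcont.tendsto.comp hr'
  constructor
  · simp only [Rrate, pPlus, ePlus]
    exact (((tendsto_const_nhds.mul hsum).mul (tendsto_const_nhds.sub hbin)).add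
      tendsto_const_nhds).sub tendsto_const_nhds
  · simp only [Rtilde, pPlus, ePlus]
    exact (((tendsto_const_nhds.mul ha).mul (tendsto_const_nhds.sub hbin')).add
      tendsto_const_nhds).sub tendsto_const_nhds
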